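/- Let n>0. There exists a constant C=C(n) such that for all t≥0 and x∈ℝ³: ∫_{ℝ³} (1+|x−tv|²+|v|²)^{−(n+3)/2} dv ≤ C ⟨t⟩^{−3} ( 1 + |x|²/(1+t²) )^{−n/2}. -/

import Mathlib

open MeasureTheory Real

noncomputable section

abbrev E3 := EuclideanSpace ℝ (Fin 3)

lemma key_id (t : ℝ) (x v : E3) :
    ‖x - t • v‖ ^ 2 + ‖v‖ ^ 2
      = (1 + t ^ 2) * ‖v - (t / (1 + t ^ 2)) • x‖ ^ 2 + ‖x‖ ^ 2 / (1 + t ^ 2) := by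
  have h : (0:ℝ) < 1 + t ^ 2 := by positivity
  rw [@norm_sub_sq_real E3 _ _ x (t • v), @norm_sub_sq_real E3 _ _ v ((t / (1 + t ^ 2)) • x)]
  simp only [inner_smul_left, inner_smul_right, norm_smul, mul_pow, sq_abs,
    real_inner_comm x v, RCLike.conj_to_real, conj_trivial, Real.norm_eq_abs]
  field_simp
  ring

lemma e3_rank : Module.finrank ℝ E3 = 3 := by simp

theorem stmt7 (n : ℝ) (hn : 0 < n) :
    ∃ C : ℝ, 0 < C ∧ ∀ t : ℝ, 0 ≤ t → ∀ x : E3,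
      (∫ v : E3, (1 + ‖x - t • v‖ ^ 2 + ‖v‖ ^ 2) ^ (-(n + 3) / 2)) ≤
        C * Real.sqrt (1 + t ^ 2) ^ (-(3 : ℝ)) *
          (1 + ‖x‖ ^ 2 / (1 + t ^ 2)) ^ (-n / 2) := by
  set p : ℝ := -(n + 3) / 2 with hp
  have hint : Integrable (fun y : E3 => (1 + ‖y‖ ^ 2) ^ p) := by
    have h3 : ((Module.finrank ℝ E3 : ℝ)) < n + 3 := by rw [e3_rank]; push_cast; linarith
    exact integrable_rpow_neg_one_add_norm_sq h3
  set C : ℝ := ∫ y : E3, (1 + ‖y‖ ^ 2) ^ p with hC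
  have hCpos : 0 < C := by
    rw [hC, integral_pos_iff_support_of_nonneg (fun y => by positivity) hint]
    have hsupp : Function.support (fun y : E3 => (1 + ‖y‖ ^ 2) ^ p) = Set.univ := by
      ext y
      simp only [Function.mem_support, Set.mem_univ, iff_true]
      exact (Real.rpow_pos_of_pos (by positivity) p).ne'
    rw [hsupp]
    exact isOpen_univ.measure_pos volume Set.univ_nonempty
  refine ⟨C, hCpos, ?_⟩
  intro t ht x
  have h1t : (0:ℝ) < 1 + t ^ 2 := by positivity
  set s : ℝ := 1 + ‖x‖ ^ 2 / (1 + t ^ 2) with hs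
  have hspos : 0 < s := by positivity
  set a : ℝ := Real.sqrt (1 + t ^ 2) with ha
  have hapos : 0 < a := Real.sqrt_pos.mpr h1t
  have ha2 : a ^ 2 = 1 + t ^ 2 := Real.sq_sqrt h1t.le
  set b : ℝ := Real.sqrt s with hb
  have hbpos : 0 < b := Real.sqrt_pos.mpr hspos
  have hb2 : b ^ 2 = s := Real.sq_sqrt hspos.le
  -- step 1: pointwise rewrite + translation invariance
  have step1 : (∫ v : E3, (1 + ‖x - t • v‖ ^ 2 + ‖v‖ ^ 2) ^ p)
      = ∫ v : E3, (s + ‖a • v‖ ^ 2) ^ p := by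
    have hpt : ∀ v : E3, (1 + ‖x - t • v‖ ^ 2 + ‖v‖ ^ 2)
        = s + ‖a • (v - (t / (1 + t ^ 2)) • x)‖ ^ 2 := by
      intro v
      rw [norm_smul, mul_pow, Real.norm_eq_abs, sq_abs, ha2, hs]
      have := key_id t x v
      linarith
    calc (∫ v : E3, (1 + ‖x - t • v‖ ^ 2 + ‖v‖ ^ 2) ^ p)
        = ∫ v : E3, (s + ‖a • (v - (t / (1 + t ^ 2)) • x)‖ ^ 2) ^ p := by
          exact integral_congr_ae (Filter.Eventually.of_forall fun v => by dsimp only; rw [hpt v])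
      _ = ∫ v : E3, (s + ‖a • v‖ ^ 2) ^ p :=
          integral_sub_right_eq_self (fun v : E3 => (s + ‖a • v‖ ^ 2) ^ p) _
  -- step 2: scaling by a
  have step2 : (∫ v : E3, (s + ‖a • v‖ ^ 2) ^ p)
      = (a ^ 3)⁻¹ * ∫ u : E3, (s + ‖u‖ ^ 2) ^ p := by
    have := MeasureTheory.Measure.integral_comp_smul (μ := (volume : Measure E3))
      (fun u : E3 => (s + ‖u‖ ^ 2) ^ p) a
    rw [this, e3_rank]
    rw [abs_of_nonneg (by positivity), smul_eq_mul]
  -- step 3: scaling by b⁻¹ to extract s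
  have step3 : (∫ u : E3, (s + ‖u‖ ^ 2) ^ p) = s ^ p * (b ^ 3 * C) := by
    have hpt : ∀ u : E3, (s + ‖u‖ ^ 2) ^ p = s ^ p * (1 + ‖b⁻¹ • u‖ ^ 2) ^ p := by
      intro u
      rw [norm_smul, mul_pow, Real.norm_eq_abs, sq_abs, ← Real.mul_rpow hspos.le (by positivity)]
      congr 1
      have : (b⁻¹) ^ 2 = s⁻¹ := by rw [inv_pow, hb2]
      rw [this]
      field_simp
    calc (∫ u : E3, (s + ‖u‖ ^ 2) ^ p)
        = ∫ u : E3, s ^ p * (1 + ‖b⁻¹ • u‖ ^ 2) ^ p :=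
          integral_congr_ae (Filter.Eventually.of_forall fun u => hpt u)
      _ = s ^ p * ∫ u : E3, (1 + ‖b⁻¹ • u‖ ^ 2) ^ p := integral_const_mul _ _
      _ = s ^ p * (b ^ 3 * C) := by
          congr 1
          have := MeasureTheory.Measure.integral_comp_smul (μ := (volume : Measure E3))
            (fun u : E3 => (1 + ‖u‖ ^ 2) ^ p) b⁻¹
          rw [this, e3_rank, inv_pow, inv_inv, abs_of_nonneg (by positivity), smul_eq_mul, hC]
  -- combine
  rw [step1, step2, step3]
  have hb3 : b ^ 3 = s ^ ((3:ℝ)/2) := by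
    rw [hb, Real.sqrt_eq_rpow, ← Real.rpow_natCast (s ^ ((1:ℝ)/2)) 3, ← Real.rpow_mul hspos.le]
    norm_num
  have hsp : s ^ p * b ^ 3 = s ^ (-n / 2) := by
    rw [hb3, ← Real.rpow_add hspos]
    congr 1
    rw [hp]; ring
  have ha3 : (a ^ 3)⁻¹ = a ^ (-(3:ℝ)) := by
    rw [Real.rpow_neg hapos.le, ← Real.rpow_natCast a 3]
    norm_num
  refine le_of_eq ?_
  calc (a ^ 3)⁻¹ * (s ^ p * (b ^ 3 * C)) = (s ^ p * b ^ 3) * ((a ^ 3)⁻¹ * C) := by ring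
    _ = C * a ^ (-(3:ℝ)) * s ^ (-n / 2) := by rw [hsp, ha3]; ring

end
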